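/- Fix λ > 0, K ≥ 0, and a continuous function f : ℝ → ℝ with f ≥ 0 and f(y) = 0 whenever |y| > K. For every ε > 0 there exists T > 0 such that for all t ≥ T and all x ∈ [−λt − t^{2/3}, −λt + t^{2/3}], one has | √(2πt) · e^{(λt−x)²/(2t)} · ∫_ℝ (1 − e^{−f(y)}) dν_x(y) − ∫_ℝ (1 − e^{−f(y)}) e^{−2λy} dy | ≤ ε, where ν_x is the Gaussian probability measure on ℝ with mean x − λt and variance t. In other words, uniformly over x in this window, E[1 − e^{−f(x + B_t − λt)}] = (1 + o_t(1)) · (∫ (1 − e^{−f(y)}) e^{−2λy} dy) · (1/√(2πt)) · e^{−(λt−x)²/(2t)}. -/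

import Mathlib

open MeasureTheory ProbabilityTheory Real Filter

lemma my_integral_gaussianReal_eq (m : ℝ) (v : NNReal) (hv : v ≠ 0) (g : ℝ → ℝ) :
    ∫ y, g y ∂(gaussianReal m v) = ∫ y, gaussianPDFReal m v y * g y := by
  rw [gaussianReal_of_var_ne_zero _ hv, gaussianPDF_def]
  have h : (fun x => ENNReal.ofReal (gaussianPDFReal m v x))
      = fun x => ((gaussianPDFReal m v x).toNNReal : ENNReal) := rfl
  rw [h, integral_withDensity_eq_integral_smul
    ((measurable_gaussianPDFReal m v).real_toNNReal) g]
  refine integral_congr_ae (Filter.Eventually.of_forall fun y => ?_)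
  simp [NNReal.smul_def, Real.coe_toNNReal _ (gaussianPDFReal_nonneg m v y)]

lemma my_abs_exp_sub_one (u : ℝ) : |Real.exp u - 1| ≤ Real.exp |u| - 1 := by
  rcases abs_cases u with ⟨h1, h2⟩ | ⟨h1, h2⟩
  · rw [h1, abs_of_nonneg (by linarith [Real.one_le_exp h2])]
  · rw [h1, abs_of_nonpos (by linarith [Real.exp_le_one_iff.2 (le_of_lt h2)])]
    have e1 : Real.exp (u/2) * Real.exp (u/2) = Real.exp u := by
      rw [← Real.exp_add]; ring_nf
    have e2 : Real.exp (-u/2) * Real.exp (-u/2) = Real.exp (-u) := by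
      rw [← Real.exp_add]; ring_nf
    have e3 : Real.exp (u/2) * Real.exp (-u/2) = 1 := by
      rw [← Real.exp_add, show u/2 + -u/2 = (0:ℝ) by ring, Real.exp_zero]
    nlinarith [sq_nonneg (Real.exp (u/2) - Real.exp (-u/2))]

/-- Uniformly over `x ∈ [-λt - t^{2/3}, -λt + t^{2/3}]` (with `λ > 0`),
`E[1 - e^{-f(x + B_t - λt)}]
  = (1 + o_t(1)) (∫ (1 - e^{-f(y)}) e^{-2λy} dy) (1/√(2πt)) e^{-(λt-x)²/(2t)}`
for a nonnegative continuous `f` supported in `[-K, K]`. -/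
theorem laplace_functional_asymptotics_left_window (lam K : ℝ) (hlam : 0 < lam) (hK : 0 ≤ K)
    (f : ℝ → ℝ) (hf : Continuous f) (hf_nonneg : ∀ y, 0 ≤ f y)
    (hf_supp : ∀ y, K < |y| → f y = 0) :
    ∀ ε > 0, ∃ T > 0, ∀ t ≥ T,
      ∀ x ∈ Set.Icc (-lam * t - t ^ ((2 : ℝ) / 3)) (-lam * t + t ^ ((2 : ℝ) / 3)),
        |Real.sqrt (2 * Real.pi * t) * Real.exp ((lam * t - x) ^ 2 / (2 * t))
            * (∫ y, (1 - Real.exp (-f y)) ∂(gaussianReal (x - lam * t) t.toNNReal))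
          - ∫ y, (1 - Real.exp (-f y)) * Real.exp (-(2 * lam * y))| ≤ ε := by
  intro ε hε
  set M : ℝ := 2 * K * Real.exp (2 * lam * K) + 1 with hM
  have hMpos : 0 < M := by positivity
  set δ0 : ℝ := Real.log (1 + ε / M) with hδ0
  have hδ0pos : 0 < δ0 := Real.log_pos (by nlinarith [div_pos hε hMpos])
  set D : ℝ → ℝ := fun t => K * t ^ ((2 : ℝ) / 3) / t + K ^ 2 / (2 * t) with hD
  have hDt0 : Tendsto D atTop (nhds 0) := by
    have h1 : Tendsto (fun t : ℝ => K * t ^ ((2 : ℝ) / 3) / t) atTop (nhds 0) := by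
      have heq : ∀ᶠ t : ℝ in atTop, K * t ^ (-(1 : ℝ)/3) = K * t ^ ((2 : ℝ) / 3) / t := by
        filter_upwards [eventually_gt_atTop (0 : ℝ)] with t ht
        rw [show (-(1:ℝ)/3) = (2:ℝ)/3 - 1 by norm_num, Real.rpow_sub ht, Real.rpow_one]
        ring
      refine Tendsto.congr' heq ?_
      have := (tendsto_rpow_neg_atTop (by norm_num : (0:ℝ) < 1/3)).const_mul K
      simpa [neg_div] using this
    have h2 : Tendsto (fun t : ℝ => K ^ 2 / (2 * t)) atTop (nhds 0) := by
      have : Tendsto (fun t : ℝ => (K ^ 2 / 2) * t⁻¹) atTop (nhds 0) := by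
        have h := tendsto_inv_atTop_zero.const_mul (K ^ 2 / 2)
        rwa [mul_zero] at h
      refine this.congr fun t => by ring
    simpa using h1.add h2
  obtain ⟨T0, hT0⟩ := Filter.eventually_atTop.mp
    ((hDt0.eventually (eventually_le_nhds hδ0pos)).and (eventually_ge_atTop (1 : ℝ)))
  refine ⟨max T0 1, lt_of_lt_of_le one_pos (le_max_right _ _), fun t ht x hx => ?_⟩
  obtain ⟨hDle, ht1⟩ := hT0 t (le_trans (le_max_left _ _) ht)
  have htpos : 0 < t := lt_of_lt_of_le one_pos ht1
  have hvt : ((t.toNNReal : NNReal) : ℝ) = t := Real.coe_toNNReal t htpos.le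
  have hv : t.toNNReal ≠ 0 := by
    simp [Real.toNNReal_eq_zero, not_le, htpos]
  set g : ℝ → ℝ := fun y => 1 - Real.exp (-f y) with hg
  have hgcont : Continuous g := continuous_const.sub (Real.continuous_exp.comp hf.neg)
  have hg01 : ∀ y, 0 ≤ g y ∧ g y ≤ 1 := fun y => by
    constructor
    · have : Real.exp (-f y) ≤ 1 := Real.exp_le_one_iff.2 (by linarith [hf_nonneg y])
      simp only [hg]; linarith
    · simp only [hg]; linarith [Real.exp_pos (-f y)]
  have hgsupp : ∀ y ∉ Set.Icc (-K) K, g y = 0 := by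
    intro y hy
    have hKy : K < |y| := lt_of_not_ge fun h => hy (Set.mem_Icc.2 (abs_le.mp h))
    simp [hg, hf_supp y hKy]
  have hgc : HasCompactSupport g := HasCompactSupport.intro isCompact_Icc hgsupp
  set ψ : ℝ → ℝ := fun y => ((lam * t - x) ^ 2 - (y - (x - lam * t)) ^ 2) / (2 * t) with hψdef
  have hψcont : Continuous ψ := by fun_prop
  have hstep : Real.sqrt (2 * Real.pi * t) * Real.exp ((lam * t - x) ^ 2 / (2 * t))
      * ∫ y, (1 - Real.exp (-f y)) ∂(gaussianReal (x - lam * t) t.toNNReal)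
      = ∫ y, g y * Real.exp (ψ y) := by
    rw [my_integral_gaussianReal_eq _ _ hv, ← integral_const_mul]
    refine integral_congr_ae (Filter.Eventually.of_forall fun y => ?_)
    have hs : Real.sqrt (2 * Real.pi * t) ≠ 0 :=
      ne_of_gt (Real.sqrt_pos.2 (by positivity))
    have he : Real.exp (ψ y)
        = Real.exp ((lam * t - x) ^ 2 / (2 * t))
          * Real.exp (-(y - (x - lam * t)) ^ 2 / (2 * t)) := by
      rw [← Real.exp_add, hψdef]; ring_nf
    simp only [gaussianPDFReal_def]
    rw [hvt, he]
    field_simp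
    ring
  rw [hstep]
  have hint1 : Integrable (fun y => g y * Real.exp (ψ y)) :=
    ((hgcont.mul hψcont.rexp)).integrable_of_hasCompactSupport (hgc.mul_right)
  have hint2 : Integrable (fun y => g y * Real.exp (-(2 * lam * y))) :=
    ((hgcont.mul (by fun_prop))).integrable_of_hasCompactSupport (hgc.mul_right)
  have : (∫ y, (1 - Real.exp (-f y)) * Real.exp (-(2 * lam * y)))
      = ∫ y, g y * Real.exp (-(2 * lam * y)) := rfl
  rw [this, ← integral_sub hint1 hint2]
  have hzero : ∀ y ∉ Set.Icc (-K) K,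
      g y * Real.exp (ψ y) - g y * Real.exp (-(2 * lam * y)) = 0 := by
    intro y hy; simp [hgsupp y hy]
  rw [← setIntegral_eq_integral_of_forall_compl_eq_zero hzero]
  set C : ℝ := Real.exp (2 * lam * K) * (Real.exp (D t) - 1) with hC
  have hvol : (volume (Set.Icc (-K) K)).toReal = 2 * K := by
    rw [Real.volume_Icc, ENNReal.toReal_ofReal (by linarith)]
    ring
  have hbound : ‖∫ y in Set.Icc (-K) K,
      (g y * Real.exp (ψ y) - g y * Real.exp (-(2 * lam * y)))‖ ≤ C * (2 * K) := by
    rw [← hvol]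
    refine norm_setIntegral_le_of_norm_le_const measure_Icc_lt_top (fun y hy => ?_)
    rcases Set.mem_Icc.mp hy with ⟨hy1, hy2⟩
    have hyK : |y| ≤ K := abs_le.2 ⟨hy1, hy2⟩
    have ha : |x + lam * t| ≤ t ^ ((2 : ℝ) / 3) :=
      abs_le.2 ⟨by linarith [hx.1], by linarith [hx.2]⟩
    -- bound on the exponent difference
    have hψ2 : ψ y + 2 * lam * y = y * (x + lam * t) / t - y ^ 2 / (2 * t) := by
      rw [hψdef]; field_simp; ring
    have hu : |ψ y + 2 * lam * y| ≤ D t := by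
      rw [hψ2, sub_eq_add_neg]
      refine (abs_add_le _ _).trans ?_
      rw [abs_neg, hD]
      have hsq : y ^ 2 ≤ K ^ 2 := sq_le_sq' (by linarith) hy2
      have h1 : |y * (x + lam * t) / t| ≤ K * t ^ ((2 : ℝ) / 3) / t := by
        rw [abs_div, abs_of_pos htpos, abs_mul]
        gcongr
      have h2 : |y ^ 2 / (2 * t)| ≤ K ^ 2 / (2 * t) := by
        rw [abs_div, abs_of_pos (by positivity : (0:ℝ) < 2 * t), abs_of_nonneg (sq_nonneg y)]
        gcongr
      linarith
    -- pointwise bound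
    have he1 : Real.exp (ψ y)
        = Real.exp (-(2 * lam * y)) * Real.exp (ψ y + 2 * lam * y) := by
      rw [← Real.exp_add]; ring_nf
    have hE2 : Real.exp (-(2 * lam * y)) ≤ Real.exp (2 * lam * K) :=
      Real.exp_le_exp.2 (by nlinarith)
    have hw : |Real.exp (ψ y + 2 * lam * y) - 1| ≤ Real.exp (D t) - 1 :=
      (my_abs_exp_sub_one _).trans (by linarith [Real.exp_le_exp.2 hu])
    have calc1 : ‖g y * Real.exp (ψ y) - g y * Real.exp (-(2 * lam * y))‖
        = |g y| * |Real.exp (ψ y) - Real.exp (-(2 * lam * y))| := by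
      rw [Real.norm_eq_abs, ← abs_mul, mul_sub]
    rw [calc1]
    have h3 : |Real.exp (ψ y) - Real.exp (-(2 * lam * y))|
        = Real.exp (-(2 * lam * y)) * |Real.exp (ψ y + 2 * lam * y) - 1| := by
      rw [he1, show Real.exp (-(2 * lam * y)) * Real.exp (ψ y + 2 * lam * y)
          - Real.exp (-(2 * lam * y))
          = Real.exp (-(2 * lam * y)) * (Real.exp (ψ y + 2 * lam * y) - 1) by ring,
        abs_mul, abs_of_pos (Real.exp_pos _)]
    rw [h3]
    have hgle : |g y| ≤ 1 := abs_le.2 ⟨by linarith [(hg01 y).1], (hg01 y).2⟩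
    calc |g y| * (Real.exp (-(2 * lam * y)) * |Real.exp (ψ y + 2 * lam * y) - 1|)
        ≤ 1 * (Real.exp (2 * lam * K) * (Real.exp (D t) - 1)) := by
          refine mul_le_mul hgle ?_ (by positivity) one_pos.le
          exact mul_le_mul hE2 hw (abs_nonneg _) (Real.exp_pos _).le
      _ = C := by rw [hC]; ring
  rw [Real.norm_eq_abs] at hbound
  refine hbound.trans ?_
  have hexp : Real.exp (D t) - 1 ≤ ε / M := by
    have : Real.exp δ0 = 1 + ε / M := Real.exp_log (by positivity)
    linarith [Real.exp_le_exp.2 hDle]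
  have hCle : C ≤ Real.exp (2 * lam * K) * (ε / M) := by
    rw [hC]
    exact mul_le_mul_of_nonneg_left hexp (Real.exp_pos _).le
  have h4 : M * (ε / M) = ε := by field_simp
  have hfin : Real.exp (2 * lam * K) * (ε / M) * (2 * K) ≤ ε := by
    have h1 : 2 * K * Real.exp (2 * lam * K) = M - 1 := by rw [hM]; ring
    have h2 : 0 ≤ ε / M := le_of_lt (div_pos hε hMpos)
    have h3 : (M - 1) * (ε / M) ≤ M * (ε / M) := by nlinarith
    calc Real.exp (2 * lam * K) * (ε / M) * (2 * K) = (M - 1) * (ε / M) := by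
            rw [← h1]; ring
      _ ≤ M * (ε / M) := h3
      _ = ε := h4
  calc C * (2 * K) ≤ Real.exp (2 * lam * K) * (ε / M) * (2 * K) :=
        mul_le_mul_of_nonneg_right hCle (by positivity)
    _ ≤ ε := hfin
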